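/- Let P be a probability measure on ℝ with Lebesgue density p continuous at x with p(x) > 0, and let H_{x,λ} be the uniform distribution on (x−λ, x+λ). Then H_{x,λ} ≪ P for λ small enough and λ · ‖dH_{x,λ}/dP‖²_{L²(P)} → 1/(2 p(x)) as λ → 0⁺; in particular r(λ) := ‖dH_{x,λ}/dP‖_{L²(P)} is of exact order λ^{-1/2}. -/

import Mathlib

open MeasureTheory Filter Topology

theorem uniform_kernel_rate (x : ℝ) (p : ℝ → ℝ) (hpm : Measurable p)
    (hp0 : ∀ u, 0 ≤ p u) (hp1 : ∫ u, p u = 1)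
    (hpcont : ContinuousAt p x) (hppos : 0 < p x) :
    (∀ᶠ lam in 𝓝[>] (0 : ℝ),
      (ENNReal.ofReal (2 * lam))⁻¹ • (volume.restrict (Set.Ioo (x - lam) (x + lam))) ≪
        volume.withDensity (fun u => ENNReal.ofReal (p u))) ∧
    Tendsto
      (fun lam : ℝ =>
        lam * (((2 * lam) ^ 2)⁻¹ * ∫ u in Set.Ioo (x - lam) (x + lam), (p u)⁻¹))
      (𝓝[>] 0) (𝓝 (1 / (2 * p x))) := by
  constructor
  · obtain ⟨δ, hδ, hball⟩ := Metric.continuousAt_iff.mp hpcont (p x / 2) (by positivity)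
    filter_upwards [Ioo_mem_nhdsGT_of_mem ⟨le_refl 0, hδ⟩] with lam hlam
    refine Measure.AbsolutelyContinuous.mk fun s hs h0 => ?_
    rw [withDensity_apply _ hs] at h0
    have hae : (fun u => ENNReal.ofReal (p u)) =ᵐ[volume.restrict s] 0 :=
      (lintegral_eq_zero_iff hpm.ennreal_ofReal).mp h0
    have hmt : MeasurableSet {u | ¬ ENNReal.ofReal (p u) = 0} :=
      (hpm.ennreal_ofReal (measurableSet_singleton 0)).compl
    have h0' : volume ({u | ¬ ENNReal.ofReal (p u) = 0} ∩ s) = 0 := by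
      have := ae_iff.mp hae
      simp only [Pi.zero_apply] at this
      rwa [Measure.restrict_apply hmt] at this
    rw [Measure.smul_apply, Measure.restrict_apply hs]
    have hsub : s ∩ Set.Ioo (x - lam) (x + lam) ⊆ {u | ¬ ENNReal.ofReal (p u) = 0} ∩ s := by
      rintro u ⟨hus, hu1, hu2⟩
      refine ⟨?_, hus⟩
      have hdist : dist u x < δ := by
        rw [Real.dist_eq]
        have : |u - x| < lam := abs_sub_lt_iff.mpr ⟨by linarith, by linarith⟩
        exact lt_trans this hlam.2
      have := hball hdist
      have hpu : 0 < p u := by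
        have := abs_sub_lt_iff.mp this
        linarith [this.1, this.2]
      simp [ENNReal.ofReal_eq_zero, not_le, hpu]
    rw [measure_mono_null hsub h0', smul_zero]
  · have hc : ContinuousAt (fun u => (p u)⁻¹) x := hpcont.inv₀ hppos.ne'
    rw [Metric.tendsto_nhdsWithin_nhds]
    intro ε hε
    obtain ⟨δ, hδpos, hδ⟩ := Metric.continuousAt_iff.mp hc ε hε
    refine ⟨δ, hδpos, fun lam hlam hdist => ?_⟩
    have hlam0 : 0 < lam := hlam
    have hlamδ : lam < δ := by
      rwa [Real.dist_eq, sub_zero, abs_of_pos hlam0] at hdist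
    set I := Set.Ioo (x - lam) (x + lam) with hI
    set c := (p x)⁻¹ with hcdef
    have hclose : ∀ u ∈ I, |(p u)⁻¹ - c| < ε := by
      rintro u ⟨hu1, hu2⟩
      have : dist u x < δ := by
        rw [Real.dist_eq]
        have : |u - x| < lam := abs_sub_lt_iff.mpr ⟨by linarith, by linarith⟩
        linarith
      have := hδ this
      rwa [Real.dist_eq] at this
    have hvol : volume I = ENNReal.ofReal (2 * lam) := by
      rw [hI, Real.volume_Ioo]; ring_nf
    have hvolfin : volume I < ⊤ := by rw [hvol]; exact ENNReal.ofReal_lt_top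
    have hint : IntegrableOn (fun u => (p u)⁻¹) I volume := by
      refine Measure.integrableOn_of_bounded (M := ε + |c|) hvolfin.ne hpm.inv.aestronglyMeasurable ?_
      refine (ae_restrict_iff' measurableSet_Ioo).mpr (ae_of_all _ fun u hu => ?_)
      have := hclose u hu
      calc ‖(p u)⁻¹‖ = |(p u)⁻¹ - c + c| := by rw [Real.norm_eq_abs]; ring_nf
        _ ≤ |(p u)⁻¹ - c| + |c| := abs_add_le _ _
        _ ≤ ε + |c| := by linarith [hclose u hu]
    have hconst : ∫ u in I, c = 2 * lam * c := by
      rw [setIntegral_const, measureReal_def, hvol, ENNReal.toReal_ofReal (by linarith), smul_eq_mul]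
    have hsubint : ∫ u in I, ((p u)⁻¹ - c) = (∫ u in I, (p u)⁻¹) - 2 * lam * c := by
      rw [integral_sub hint ((integrableOn_const_iff).mpr (Or.inr hvolfin)), hconst]
    have hbound : |∫ u in I, ((p u)⁻¹ - c)| ≤ ε * (2 * lam) := by
      have := norm_setIntegral_le_of_norm_le_const (C := ε) hvolfin
        (fun u hu => by rw [Real.norm_eq_abs]; exact (hclose u hu).le)
      · rw [Real.norm_eq_abs] at this
        calc |∫ u in I, ((p u)⁻¹ - c)| ≤ ε * (volume I).toReal := this
          _ = ε * (2 * lam) := by rw [hvol, ENNReal.toReal_ofReal (by linarith)]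
    rw [Real.dist_eq]
    have hkey : lam * (((2 * lam) ^ 2)⁻¹ * ∫ u in I, (p u)⁻¹) - 1 / (2 * p x)
        = (4 * lam)⁻¹ * ((∫ u in I, (p u)⁻¹) - 2 * lam * c) := by
      rw [hcdef]
      field_simp
      ring
    rw [hkey, ← hsubint, abs_mul, abs_of_pos (by positivity : (0:ℝ) < (4 * lam)⁻¹)]
    calc (4 * lam)⁻¹ * |∫ u in I, ((p u)⁻¹ - c)| ≤ (4 * lam)⁻¹ * (ε * (2 * lam)) := by
          apply mul_le_mul_of_nonneg_left hbound (by positivity)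
      _ = ε / 2 := by field_simp; ring
      _ < ε := by linarith
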